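/- Let (x,λ) be a solution of (PD-AVD) and let (x*,λ*) be a primal-dual optimal solution. Then for every μ ∈ Y with ‖μ − λ*‖ ≤ 1 and every t ≥ t₀ one has E_{x*,μ}(t) ≤ 2·E_{x*,λ*}(t₀) + θ(α − 1) + θ²t²·⟨μ − λ*, Ax(t) − b⟩. -/

import Mathlib

open Set MeasureTheory Filter Topology Asymptotics
open scoped RealInnerProductSpace ENNReal

/-- The augmented Lagrangian `L_β(x,λ) = f(x) + ⟪λ, Ax − b⟫ + (β/2)‖Ax − b‖²`. -/
noncomputable def augLagrangian {X Y : Type*}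
    [NormedAddCommGroup X] [InnerProductSpace ℝ X]
    [NormedAddCommGroup Y] [InnerProductSpace ℝ Y]
    (f : X → ℝ) (A : X →L[ℝ] Y) (b : Y) (β : ℝ) (u : X) (μ : Y) : ℝ :=
  f u + ⟪μ, A u - b⟫ + β / 2 * ‖A u - b‖ ^ 2

/-- The energy function `E_{z,μ}(t)` associated to a trajectory `(x,λ)` with velocities
`(x',λ')`, where the product norm on `X × Y` is the Hilbert norm
`‖(u,v)‖² = ‖u‖² + ‖v‖²` and `ξ = θα − θ − 1`. -/
noncomputable def pdEnergy {X Y : Type*}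
    [NormedAddCommGroup X] [InnerProductSpace ℝ X]
    [NormedAddCommGroup Y] [InnerProductSpace ℝ Y]
    (f : X → ℝ) (A : X →L[ℝ] Y) (b : Y) (α β θ : ℝ)
    (x : ℝ → X) (x' : ℝ → X) (l : ℝ → Y) (l' : ℝ → Y)
    (z : X) (μ : Y) (t : ℝ) : ℝ :=
  θ ^ 2 * t ^ 2 *
      (augLagrangian f A b β (x t) μ - augLagrangian f A b β z (l t))
    + 1 / 2 * (‖x t - z + (θ * t) • x' t‖ ^ 2 + ‖l t - μ + (θ * t) • l' t‖ ^ 2)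
    + (θ * α - θ - 1) / 2 * (‖x t - z‖ ^ 2 + ‖l t - μ‖ ^ 2)

set_option maxHeartbeats 1000000

lemma convex_grad_ineq {X : Type*} [NormedAddCommGroup X] [InnerProductSpace ℝ X] [CompleteSpace X]
    {f : X → ℝ} {f' : X → X} (hconv : ConvexOn ℝ univ f)
    (hgrad : ∀ u, HasGradientAt f (f' u) u) (u v : X) :
    f u + ⟪f' u, v - u⟫ ≤ f v := by
  set φ : ℝ → ℝ := fun s => f (u + s • (v - u)) with hφ
  have hφconv : ConvexOn ℝ univ φ := by
    have := hconv.comp_affineMap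
      (AffineMap.mk (fun s : ℝ => u + s • (v - u))
        { toFun := fun s : ℝ => s • (v - u)
          map_add' := by intro a b; simp [add_smul]
          map_smul' := by intro a b; simp [smul_smul] }
        (by intro p vv; simp [add_smul]; abel))
    simpa [Function.comp_def, hφ] using this
  have hline : HasDerivAt (fun s : ℝ => u + s • (v - u)) (v - u) 0 := by
    simpa using ((hasDerivAt_id (0:ℝ)).smul_const (v - u)).const_add u
  have hd : HasDerivAt φ ⟪f' u, v - u⟫ 0 := by
    have := (hgrad (u + (0:ℝ) • (v - u))).hasFDerivAt.comp_hasDerivAt 0 hline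
    simpa [InnerProductSpace.toDual_apply_apply, Function.comp_def, hφ] using this
  have := hφconv.le_slope_of_hasDerivAt (mem_univ 0) (mem_univ 1) one_pos hd
  have hs : slope φ 0 1 = f v - f u := by simp [slope, hφ]
  rw [hs] at this
  linarith

theorem stmt4
    {X Y : Type*}
    [NormedAddCommGroup X] [InnerProductSpace ℝ X] [CompleteSpace X]
    [NormedAddCommGroup Y] [InnerProductSpace ℝ Y] [CompleteSpace Y]
    (f : X → ℝ) (f' : X → X) (A : X →L[ℝ] Y) (b : Y)
    (hconv : ConvexOn ℝ univ f)
    (hgrad : ∀ u, HasGradientAt f (f' u) u)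
    (hf'cont : Continuous f')
    (t₀ α β θ : ℝ) (ht₀ : 0 < t₀) (hα : 3 ≤ α) (hβ : 0 ≤ β)
    (hθ1 : 1 / (α - 1) ≤ θ) (hθ2 : θ ≤ 1 / 2)
    (x : ℝ → X) (x' x'' : ℝ → X) (l : ℝ → Y) (l' l'' : ℝ → Y)
    (hx1 : ∀ t ∈ Ici t₀, HasDerivAt x (x' t) t)
    (hx2 : ∀ t ∈ Ici t₀, HasDerivAt x' (x'' t) t)
    (hx3 : ContinuousOn x'' (Ici t₀))
    (hl1 : ∀ t ∈ Ici t₀, HasDerivAt l (l' t) t)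
    (hl2 : ∀ t ∈ Ici t₀, HasDerivAt l' (l'' t) t)
    (hl3 : ContinuousOn l'' (Ici t₀))
    (hode1 : ∀ t ∈ Ici t₀, x'' t + (α / t) • x' t + f' (x t)
        + (ContinuousLinearMap.adjoint A) (l t + (θ * t) • l' t)
        + β • (ContinuousLinearMap.adjoint A) (A (x t) - b) = 0)
    (hode2 : ∀ t ∈ Ici t₀, l'' t + (α / t) • l' t
        - (A (x t + (θ * t) • x' t) - b) = 0)
    (xs : X) (ls : Y)
    (hopt1 : f' xs + (ContinuousLinearMap.adjoint A) ls = 0)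
    (hopt2 : A xs = b)
    :
    ∀ μ : Y, ‖μ - ls‖ ≤ 1 → ∀ t ∈ Ici t₀,
      pdEnergy f A b α β θ x x' l l' xs μ t ≤
        2 * pdEnergy f A b α β θ x x' l l' xs ls t₀ + θ * (α - 1)
          + θ ^ 2 * t ^ 2 * ⟪μ - ls, A (x t) - b⟫ := by
  intro μ hμ t ht
  set A' := ContinuousLinearMap.adjoint A with hA'
  -- basic scalar facts
  have hα1 : (0:ℝ) < α - 1 := by linarith
  have hθpos : 0 < θ := lt_of_lt_of_le (by positivity) hθ1
  have hξ : 0 ≤ θ * α - θ - 1 := by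
    have := (div_le_iff₀ hα1).mp hθ1
    nlinarith
  set ξ := θ * α - θ - 1 with hξdef
  -- the convex function g and its gradient G
  set g : X → ℝ := fun u => f u + ⟪ls, A u - b⟫ + β / 2 * ⟪A u - b, A u - b⟫ with hg
  set G : X → X := fun u => f' u + A' ls + β • A' (A u - b) with hGdef
  have hgineq : ∀ u v : X, g u + ⟪G u, v - u⟫ ≤ g v := by
    intro u v
    have h1 := convex_grad_ineq hconv hgrad u v
    have hsub : A v - b - (A u - b) = A (v - u) := by rw [map_sub]; abel
    have h2 : ⟪A' ls, v - u⟫ = ⟪ls, A v - b⟫ - ⟪ls, A u - b⟫ := by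
      rw [hA', ContinuousLinearMap.adjoint_inner_left, ← hsub, inner_sub_right]
    have h3 : ⟪A' (A u - b), v - u⟫ = ⟪A u - b, A v - b⟫ - ⟪A u - b, A u - b⟫ := by
      rw [hA', ContinuousLinearMap.adjoint_inner_left, ← hsub, inner_sub_right]
    have h4 : (0:ℝ) ≤ ⟪A v - b, A v - b⟫ - 2*⟪A u - b, A v - b⟫ + ⟪A u - b, A u - b⟫ := by
      have h := real_inner_self_nonneg (x := A v - b - (A u - b))
      rw [real_inner_sub_sub_self] at h
      linarith [h, real_inner_comm (A u - b) (A v - b)]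
    have hGexp : ⟪G u, v - u⟫
        = ⟪f' u, v - u⟫ + ⟪A' ls, v - u⟫ + β * ⟪A' (A u - b), v - u⟫ := by
      simp [hGdef, inner_add_left, real_inner_smul_left]
    have h5 : 0 ≤ β * (⟪A v - b, A v - b⟫ - 2*⟪A u - b, A v - b⟫ + ⟪A u - b, A u - b⟫) :=
      mul_nonneg hβ h4
    simp only [hg]
    rw [hGexp, h2, h3]
    nlinarith [h1, h5]
  have hGxs : G xs = 0 := by
    simp [hGdef, hopt2, sub_self, map_zero, hopt1]
  have hgmin : ∀ u, g xs ≤ g u := by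
    intro u
    have := hgineq xs u
    simpa [hGxs, inner_zero_left] using this
  -- the trajectory combinations
  set Xc : ℝ → X := fun t => x t - xs + (θ * t) • x' t with hXc
  set Lc : ℝ → Y := fun t => l t - ls + (θ * t) • l' t with hLc
  -- rewritten energy
  set E2 : ℝ → ℝ := fun t => θ^2 * t^2 * (g (x t) - g xs)
      + 1/2 * ⟪Xc t, Xc t⟫ + 1/2 * ⟪Lc t, Lc t⟫
      + ξ/2 * ⟪x t - xs, x t - xs⟫ + ξ/2 * ⟪l t - ls, l t - ls⟫ with hE2
  have hE2eq : ∀ s, pdEnergy f A b α β θ x x' l l' xs ls s = E2 s := by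
    intro s
    simp only [pdEnergy, augLagrangian, E2, hg, real_inner_self_eq_norm_sq, hopt2, sub_self,
      inner_zero_right, norm_zero]
    ring
  -- derivative of E2
  have hE2d : ∀ s ∈ Ici t₀, HasDerivAt E2
      (θ*s*(2*θ*(g (x s) - g xs)) - θ*s*⟪x s - xs, G (x s)⟫
        - ξ*θ*s*(⟪x' s, x' s⟫ + ⟪l' s, l' s⟫)) s := by
    intro s hs
    have hspos : 0 < s := lt_of_lt_of_le ht₀ hs
    have hsne : s ≠ 0 := ne_of_gt hspos
    have hxs := hx1 s hs
    have hxs' := hx2 s hs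
    have hls := hl1 s hs
    have hls' := hl2 s hs
    -- derivative of Xc
    have hXd : HasDerivAt Xc
        ((-ξ) • x' s - (θ*s) • G (x s) - (θ*s) • (A' (Lc s))) s := by
      have hsm : HasDerivAt (fun r : ℝ => (θ*r) • x' r) (θ • x' s + (θ*s) • x'' s) s := by
        have := ((hasDerivAt_id s).const_mul θ).smul hxs'
        exact this.congr_deriv (by simp only [id, mul_one]; rw [add_comm])
      have hbase : HasDerivAt Xc (x' s + (θ • x' s + (θ*s) • x'' s)) s := by
        rw [hXc]; exact (hxs.sub_const xs).add hsm
      convert hbase using 1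
      have hode := hode1 s hs
      have hx''eq : x'' s = -((α/s) • x' s) - f' (x s)
          - A' (l s + (θ*s) • l' s) - β • A' (A (x s) - b) := by
        linear_combination (norm := module) hode
      rw [hx''eq]
      simp only [hGdef, hLc, map_add, map_sub, _root_.map_smul, smul_add, smul_sub, smul_smul,
        smul_neg, neg_smul]
      match_scalars <;> field_simp <;> ring
    -- derivative of Lc
    have hLd : HasDerivAt Lc ((-ξ) • l' s + (θ*s) • (A (Xc s))) s := by
      have hsm : HasDerivAt (fun r : ℝ => (θ*r) • l' r) (θ • l' s + (θ*s) • l'' s) s := by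
        have := ((hasDerivAt_id s).const_mul θ).smul hls'
        exact this.congr_deriv (by simp only [id, mul_one]; rw [add_comm])
      have hbase : HasDerivAt Lc (l' s + (θ • l' s + (θ*s) • l'' s)) s := by
        rw [hLc]; exact (hls.sub_const ls).add hsm
      convert hbase using 1
      have hode := hode2 s hs
      have hl''eq : l'' s = A (x s + (θ*s) • x' s) - b - (α/s) • l' s := by
        linear_combination (norm := module) hode
      rw [hl''eq]
      simp only [hXc, map_add, map_sub, _root_.map_smul, smul_add, smul_sub, smul_smul,
        smul_neg, neg_smul, hopt2]
      match_scalars <;> field_simp <;> ring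
    -- derivative of g ∘ x
    have hAxb : HasDerivAt (fun r => A (x r) - b) (A (x' s)) s :=
      (A.hasFDerivAt.comp_hasDerivAt s hxs).sub_const b
    have c1 : HasDerivAt (fun r => f (x r)) ⟪f' (x s), x' s⟫ s := by
      have := (hgrad (x s)).hasFDerivAt.comp_hasDerivAt s hxs
      simpa [InnerProductSpace.toDual_apply_apply, Function.comp_def] using this
    have c2 : HasDerivAt (fun r => ⟪ls, A (x r) - b⟫) ⟪ls, A (x' s)⟫ s := by
      have := HasDerivAt.inner ℝ (hasDerivAt_const s ls) hAxb
      simpa using this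
    have c3 : HasDerivAt (fun r => β/2 * ⟪A (x r) - b, A (x r) - b⟫)
        (β/2 * (⟪A (x s) - b, A (x' s)⟫ + ⟪A (x' s), A (x s) - b⟫)) s :=
      (HasDerivAt.inner ℝ hAxb hAxb).const_mul (β/2)
    have hgx : HasDerivAt (fun r => g (x r))
        (⟪f' (x s), x' s⟫ + ⟪ls, A (x' s)⟫
          + β/2 * (⟪A (x s) - b, A (x' s)⟫ + ⟪A (x' s), A (x s) - b⟫)) s := by
      simp only [hg]
      exact (c1.add c2).add c3
    -- assemble
    have hp : HasDerivAt (fun r : ℝ => θ^2 * r^2) (θ^2 * (2*s)) s := by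
      have := (hasDerivAt_pow 2 s).const_mul (θ^2)
      simpa using this
    have T1 := hp.mul (hgx.sub_const (g xs))
    have T2 := (HasDerivAt.inner ℝ hXd hXd).const_mul (1/2 : ℝ)
    have T3 := (HasDerivAt.inner ℝ hLd hLd).const_mul (1/2 : ℝ)
    have hx4 : HasDerivAt (fun r => x r - xs) (x' s) s := hxs.sub_const xs
    have hl4 : HasDerivAt (fun r => l r - ls) (l' s) s := hls.sub_const ls
    have T4 := (HasDerivAt.inner ℝ hx4 hx4).const_mul (ξ/2 : ℝ)
    have T5 := (HasDerivAt.inner ℝ hl4 hl4).const_mul (ξ/2 : ℝ)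
    have Hsum := ((((T1.add T2).add T3).add T4).add T5)
    rw [hE2]
    refine Hsum.congr_deriv ?_
    simp only [hXc, hLc, hGdef, hg, hA', map_add, map_sub, _root_.map_smul,
      ContinuousLinearMap.adjoint_inner_left, ContinuousLinearMap.adjoint_inner_right,
      inner_add_left, inner_add_right, inner_sub_left, inner_sub_right,
      real_inner_smul_left, real_inner_smul_right, inner_neg_left, inner_neg_right,
      smul_add, smul_sub, smul_smul, smul_neg, neg_smul, hopt2, real_inner_comm]
    ring
  -- E2 antitone
  have hmono : AntitoneOn E2 (Ici t₀) := by
    apply antitoneOn_of_deriv_nonpos (convex_Ici t₀)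
    · exact fun s hs => ((hE2d s hs).continuousAt).continuousWithinAt
    · intro s hs
      rw [interior_Ici] at hs
      exact ((hE2d s (le_of_lt (mem_Ioi.mp hs))).differentiableAt).differentiableWithinAt
    · intro s hs
      rw [interior_Ici] at hs
      have hst : t₀ ≤ s := le_of_lt hs
      rw [(hE2d s hst).deriv]
      have hspos : 0 < s := lt_of_lt_of_le ht₀ hst
      have h1 : g (x s) - g xs ≤ ⟪x s - xs, G (x s)⟫ := by
        have := hgineq (x s) xs
        have hc : ⟪G (x s), xs - x s⟫ = - ⟪x s - xs, G (x s)⟫ := by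
          rw [real_inner_comm, ← inner_neg_left]; simp
        rw [hc] at this; linarith
      have h0 : 0 ≤ g (x s) - g xs := by have := hgmin (x s); linarith
      have hx'0 : (0:ℝ) ≤ ⟪x' s, x' s⟫ := real_inner_self_nonneg
      have hl'0 : (0:ℝ) ≤ ⟪l' s, l' s⟫ := real_inner_self_nonneg
      have hts : 0 ≤ θ * s := by positivity
      have e1 : θ*s*(g (x s) - g xs) ≤ θ*s*⟪x s - xs, G (x s)⟫ :=
        mul_le_mul_of_nonneg_left h1 hts
      have e2 : 0 ≤ ξ*(θ*s*(⟪x' s, x' s⟫ + ⟪l' s, l' s⟫)) :=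
        mul_nonneg hξ (mul_nonneg hts (add_nonneg hx'0 hl'0))
      have e3 : (2*θ)*(θ*s*(g (x s) - g xs)) ≤ θ*s*(g (x s) - g xs) :=
        mul_le_of_le_one_left (mul_nonneg hts h0) (by linarith)
      linarith [e1, e2, e3]
  -- monotonicity conclusion
  have hE2t : E2 t ≤ E2 t₀ := hmono self_mem_Ici ht ht
  have hEt : pdEnergy f A b α β θ x x' l l' xs ls t ≤
      pdEnergy f A b α β θ x x' l l' xs ls t₀ := by
    rw [hE2eq, hE2eq]; exact hE2t
  -- final comparison
  have hnormL : ‖l t - μ + (θ*t) • l' t‖^2 ≤ 2*‖Lc t‖^2 + 2*‖μ - ls‖^2 := by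
    have hid : l t - μ + (θ*t) • l' t = Lc t - (μ - ls) := by simp only [hLc]; abel
    rw [hid]
    have h := norm_sub_le (Lc t) (μ - ls)
    nlinarith [norm_nonneg (Lc t), norm_nonneg (μ - ls), norm_nonneg (Lc t - (μ - ls)), sq_nonneg (‖Lc t‖ - ‖μ - ls‖)]
  have hnorml : ‖l t - μ‖^2 ≤ 2*‖l t - ls‖^2 + 2*‖μ - ls‖^2 := by
    have hid : l t - μ = (l t - ls) - (μ - ls) := by abel
    rw [hid]
    have h := norm_sub_le (l t - ls) (μ - ls)
    nlinarith [norm_nonneg (l t - ls), norm_nonneg (μ - ls), norm_nonneg ((l t - ls) - (μ - ls)), sq_nonneg (‖l t - ls‖ - ‖μ - ls‖)]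
  have haug : augLagrangian f A b β (x t) μ
      = augLagrangian f A b β (x t) ls + ⟪μ - ls, A (x t) - b⟫ := by
    simp only [augLagrangian, inner_sub_left]; ring
  have e1 : augLagrangian f A b β (x t) ls = g (x t) := by
    simp [augLagrangian, hg, real_inner_self_eq_norm_sq]
  have e2 : augLagrangian f A b β xs (l t) = g xs := by
    simp [augLagrangian, hg, hopt2, sub_self, inner_zero_right, norm_zero]
  have ha1 : 0 ≤ augLagrangian f A b β (x t) ls - augLagrangian f A b β xs (l t) := by
    rw [e1, e2]; linarith [hgmin (x t)]
  have hμ2 : ‖μ - ls‖^2 ≤ 1 := by nlinarith [norm_nonneg (μ - ls)]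
  have hc2 : (0:ℝ) ≤ θ^2*t^2 := by positivity
  have key : pdEnergy f A b α β θ x x' l l' xs μ t ≤
      2 * pdEnergy f A b α β θ x x' l l' xs ls t + θ*(α-1)
        + θ^2*t^2*⟪μ - ls, A (x t) - b⟫ := by
    simp only [pdEnergy]
    rw [haug]
    have q1 : (θ*α-θ-1)/2 * ‖l t - μ‖^2
        ≤ (θ*α-θ-1)/2 * (2*‖l t - ls‖^2 + 2*‖μ-ls‖^2) :=
      mul_le_mul_of_nonneg_left hnorml (by rw [← hξdef]; linarith)
    have r1 : (θ*α-θ-1)*‖μ-ls‖^2 ≤ (θ*α-θ-1)*1 :=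
      mul_le_mul_of_nonneg_left hμ2 (by rw [← hξdef]; exact hξ)
    have r2 : 0 ≤ (θ*α-θ-1)*‖x t - xs‖^2 :=
      mul_nonneg (by rw [← hξdef]; exact hξ) (sq_nonneg _)
    have hLct : Lc t = l t - ls + (θ*t) • l' t := by rw [hLc]
    rw [← hLct]
    linarith [mul_nonneg hc2 ha1, sq_nonneg ‖x t - xs + (θ*t) • x' t‖, hnormL, q1, r1, r2,
      sq_nonneg ‖Lc t‖]
  linarith [hEt, key]
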